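/- Let (X, ‖·‖) be a complex normed vector space. Then there exists a map [·,·] : X × X → ℂ such that: [x+y,z] = [x,z] + [y,z]; [λx,y] = λ[x,y] for all λ ∈ ℂ; [x,λy] = conj(λ)[x,y] for all λ ∈ ℂ; |[x,y]| ≤ ‖x‖·‖y‖ for all x,y; and [x,x] = ‖x‖² for all x ∈ X. -/

import Mathlib

namespace LumerGilesAux

variable {X : Type*} [NormedAddCommGroup X] [NormedSpace ℂ X]

/-- Setoid identifying vectors that are nonzero scalar multiples of each other. -/
def sipSetoid (X : Type*) [AddCommGroup X] [Module ℂ X] : Setoid X where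
  r x y := ∃ c : ℂ, c ≠ 0 ∧ y = c • x
  iseqv := by
    refine ⟨fun x => ⟨1, one_ne_zero, (one_smul _ _).symm⟩, ?_, ?_⟩
    · rintro x y ⟨c, hc, rfl⟩
      exact ⟨c⁻¹, inv_ne_zero hc, by simp [smul_smul, inv_mul_cancel₀ hc]⟩
    · rintro x y z ⟨c, hc, rfl⟩ ⟨d, hd, rfl⟩
      exact ⟨d * c, mul_ne_zero hd hc, by simp [smul_smul]⟩

noncomputable def rep (y : X) : X := (Quotient.mk (sipSetoid X) y).out

lemma rep_spec (y : X) : ∃ c : ℂ, c ≠ 0 ∧ y = c • rep y :=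
  Quotient.exact (Quotient.out_eq (Quotient.mk (sipSetoid X) y))

lemma rep_smul (μ : ℂ) (hμ : μ ≠ 0) (y : X) : rep (μ • y) = rep y :=
  congrArg Quotient.out (Quotient.sound
    ⟨μ⁻¹, inv_ne_zero hμ, by rw [smul_smul, inv_mul_cancel₀ hμ, one_smul]⟩)

noncomputable def coef (y : X) : ℂ := (rep_spec y).choose

lemma coef_ne_zero (y : X) : coef y ≠ 0 := (rep_spec y).choose_spec.1

lemma coef_smul_rep (y : X) : y = coef y • rep y := (rep_spec y).choose_spec.2

lemma rep_ne_zero {y : X} (hy : y ≠ 0) : rep y ≠ 0 := by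
  intro h
  apply hy
  rw [coef_smul_rep y, h, smul_zero]

lemma norm_eq (y : X) : ‖y‖ = ‖coef y‖ * ‖rep y‖ := by
  conv_lhs => rw [coef_smul_rep y]
  exact norm_smul _ _

open Classical in
noncomputable def phi (r : X) : X →L[ℂ] ℂ :=
  if h : r = 0 then 0 else (exists_dual_vector ℂ r (norm_ne_zero_iff.mpr h)).choose

lemma phi_norm {r : X} (h : r ≠ 0) : ‖phi r‖ = 1 := by
  unfold phi
  rw [dif_neg h]
  exact (exists_dual_vector ℂ r (norm_ne_zero_iff.mpr h)).choose_spec.1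

lemma phi_apply_self {r : X} (h : r ≠ 0) : phi r r = (‖r‖ : ℂ) := by
  unfold phi
  rw [dif_neg h]
  exact (exists_dual_vector ℂ r (norm_ne_zero_iff.mpr h)).choose_spec.2

end LumerGilesAux

open LumerGilesAux in
/-- Lumer–Giles: every complex normed vector space can be represented as a
semi-inner product space (with Giles's homogeneity in the second argument)
whose induced norm is the given norm. -/
theorem exists_sip_representation {X : Type*} [NormedAddCommGroup X]
    [NormedSpace ℂ X] :
    ∃ f : X → X → ℂ,
      (∀ x y z : X, f (x + y) z = f x z + f y z) ∧
      (∀ (l : ℂ) (x y : X), f (l • x) y = l * f x y) ∧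
      (∀ (l : ℂ) (x y : X), f x (l • y) = (starRingEnd ℂ) l * f x y) ∧
      (∀ x y : X, ‖f x y‖ ≤ ‖x‖ * ‖y‖) ∧
      (∀ x : X, f x x = (‖x‖ : ℂ) ^ 2) := by
  classical
  refine ⟨fun x y => if y = 0 then 0 else
      (starRingEnd ℂ) (coef y) * (‖rep y‖ : ℂ) * phi (rep y) x, ?_, ?_, ?_, ?_, ?_⟩
  · intro x y z
    by_cases h : z = 0
    · simp [h]
    · simp only [if_neg h, map_add]
      ring
  · intro l x y
    by_cases h : y = 0
    · simp [h]
    · simp only [if_neg h, map_smul, smul_eq_mul]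
      ring
  · intro l x y
    by_cases hl : l = 0
    · simp [hl]
    by_cases hy : y = 0
    · simp [hy]
    have hly : l • y ≠ 0 := smul_ne_zero hl hy
    have hrep : rep (l • y) = rep y := rep_smul l hl y
    have hry : rep y ≠ 0 := rep_ne_zero hy
    have hcoef : coef (l • y) = l * coef y := by
      have h1 : coef (l • y) • rep y = (l * coef y) • rep y := by
        conv_lhs => rw [← hrep, ← coef_smul_rep (l • y)]
        rw [mul_smul, ← coef_smul_rep y]
      exact smul_left_injective ℂ hry h1
    simp only [if_neg hly, if_neg hy, hrep, hcoef, map_mul]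
    ring
  · intro x y
    by_cases hy : y = 0
    · simp [hy]
    have hr : rep y ≠ 0 := rep_ne_zero hy
    simp only [if_neg hy]
    have hb : ‖phi (rep y) x‖ ≤ ‖x‖ := by
      have := (phi (rep y)).le_opNorm x
      rwa [phi_norm hr, one_mul] at this
    have key : ‖(starRingEnd ℂ) (coef y) * (‖rep y‖ : ℂ) * phi (rep y) x‖
        = ‖coef y‖ * ‖rep y‖ * ‖phi (rep y) x‖ := by
      simp [map_mul, Complex.norm_conj, Complex.norm_real,
        abs_of_nonneg (norm_nonneg (rep y))]
    rw [key]
    calc ‖coef y‖ * ‖rep y‖ * ‖phi (rep y) x‖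
        ≤ ‖coef y‖ * ‖rep y‖ * ‖x‖ := by gcongr
      _ = ‖x‖ * ‖y‖ := by rw [norm_eq y]; ring
  · intro x
    by_cases hx : x = 0
    · simp [hx]
    have hr : rep x ≠ 0 := rep_ne_zero hx
    have hphi : phi (rep x) x = coef x * (‖rep x‖ : ℂ) := by
      have h1 : phi (rep x) x = phi (rep x) (coef x • rep x) := by
        rw [← coef_smul_rep x]
      rw [h1, map_smul, phi_apply_self hr, smul_eq_mul]
    simp only [if_neg hx, hphi]
    have hc : (starRingEnd ℂ) (coef x) * coef x = ((‖coef x‖ : ℝ) : ℂ) ^ 2 :=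
      RCLike.conj_mul (coef x)
    rw [norm_eq x]
    push_cast
    linear_combination ((‖rep x‖ : ℂ)) ^ 2 * hc
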